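/- Let f : ℝ≥0 → ℂ satisfy f(0) = 0 and |f(x) - c·f(y)| ≤ K·|x - c·y| for all x, y ≥ 0 and all unimodular c ∈ ℂ. Let A, B be d × d complex matrices with SVDs A = U_A Σ_A V_A*, B = U_B Σ_B V_B*, and define f_s(A) = U_A f(Σ_A) V_A* (applying f entrywise to the diagonal of Σ_A), similarly for B. Then ‖f_s(A) - f_s(B)‖_F ≤ K·‖A - B‖_F. -/

import Mathlib

set_option maxHeartbeats 1000000


/-- The Frobenius (Hilbert–Schmidt) norm of a complex square matrix. -/
noncomputable def frobNorm {d : ℕ} (M : Matrix (Fin d) (Fin d) ℂ) : ℝ :=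
  Real.sqrt (∑ i, ∑ j, ‖M i j‖ ^ 2)


lemma normsq_eq (z : ℂ) : ‖z‖^2 = Complex.normSq z := by
  rw [Complex.sq_norm]

lemma key_scalar (f : ℝ → ℂ) (K : ℝ) (h0 : f 0 = 0)
    (hK : ∀ x y : ℝ, 0 ≤ x → 0 ≤ y → ∀ c : ℂ, ‖c‖ = 1 →
      ‖f x - c * f y‖ ≤ K * ‖(x : ℂ) - c * (y : ℂ)‖)
    (a b : ℝ) (ha : 0 ≤ a) (hb : 0 ≤ b) (z w : ℂ) :
    ‖f a * z - w * f b‖^2 ≤ K^2 * ‖(a:ℂ) * z - w * (b:ℂ)‖^2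
      + (1/2) * ((‖f a‖^2 - ‖f b‖^2) - K^2 * (a^2 - b^2)) * (‖z‖^2 - ‖w‖^2) := by
  have hKnn : 0 ≤ K := by
    have := hK 1 0 zero_le_one le_rfl 1 (by simp)
    simp [h0] at this
    calc (0:ℝ) ≤ ‖f 1‖ := norm_nonneg _
    _ ≤ K := by simpa using this
  have hfa : ‖f a‖ ≤ K * a := by
    have := hK a 0 ha le_rfl 1 (by simp)
    simpa [h0, _root_.abs_of_nonneg ha] using this
  have hfb : ‖f b‖ ≤ K * b := by
    have := hK b 0 hb le_rfl 1 (by simp)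
    simpa [h0, _root_.abs_of_nonneg hb] using this
  have hfa2 : ‖f a‖^2 ≤ K^2 * a^2 := by nlinarith [norm_nonneg (f a)]
  have hfb2 : ‖f b‖^2 ≤ K^2 * b^2 := by nlinarith [norm_nonneg (f b)]
  -- expand hK for general unimodular c
  have hc' : ∀ c : ℂ, ‖c‖ = 1 →
      ‖f a‖^2 + ‖f b‖^2 - 2 * ((starRingEnd ℂ c) * (f a * starRingEnd ℂ (f b))).re
        ≤ K^2 * (a^2 + b^2 - 2*a*b*c.re) := by
    intro c hc
    have h := hK a b ha hb c hc
    have h2 : ‖f a - c * f b‖^2 ≤ K^2 * ‖(a:ℂ) - c * (b:ℂ)‖^2 := by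
      have := mul_le_mul h h (norm_nonneg _) (by positivity)
      calc ‖f a - c * f b‖^2 = ‖f a - c * f b‖ * ‖f a - c * f b‖ := by rw [sq]
        _ ≤ (K * ‖(a:ℂ) - c * (b:ℂ)‖) * (K * ‖(a:ℂ) - c * (b:ℂ)‖) := this
        _ = K^2 * ‖(a:ℂ) - c * (b:ℂ)‖^2 := by ring
    rw [normsq_eq, normsq_eq, Complex.normSq_sub, Complex.normSq_sub] at h2
    have hcn : Complex.normSq c = 1 := by
      have := normsq_eq c; rw [hc] at this; simpa using this.symm
    simp only [map_mul, Complex.normSq_mul, hcn, one_mul] at h2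
    have e1 : (f a * ((starRingEnd ℂ) c * (starRingEnd ℂ) (f b))).re
        = ((starRingEnd ℂ c) * (f a * starRingEnd ℂ (f b))).re := by congr 1; ring
    have e2 : ((a:ℂ) * ((starRingEnd ℂ) c * (starRingEnd ℂ) (b:ℂ))).re = a*b*c.re := by
      simp [Complex.mul_re, Complex.conj_re, Complex.conj_im, Complex.ofReal_re, Complex.ofReal_im]
      ring
    rw [e1, e2] at h2
    calc ‖f a‖^2 + ‖f b‖^2 - 2 * ((starRingEnd ℂ c) * (f a * starRingEnd ℂ (f b))).re
        = Complex.normSq (f a) + Complex.normSq (f b)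
          - 2 * ((starRingEnd ℂ c) * (f a * starRingEnd ℂ (f b))).re := by
          rw [normsq_eq, normsq_eq]
      _ ≤ K^2 * (Complex.normSq (a:ℂ) + Complex.normSq (b:ℂ) - 2 * (a*b*c.re)) := by
          linarith
      _ = K^2 * (a^2 + b^2 - 2*a*b*c.re) := by
          rw [Complex.normSq_ofReal, Complex.normSq_ofReal]; ring
  -- expand both sides
  set u : ℂ := f a * (starRingEnd ℂ) (f b) with hu
  set t : ℂ := z * (starRingEnd ℂ) w with ht
  have E1 : ‖f a * z - w * f b‖^2
      = ‖f a‖^2 * ‖z‖^2 + ‖w‖^2 * ‖f b‖^2 - 2*(u*t).re := by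
    rw [normsq_eq, Complex.normSq_sub]
    have e : (f a * z) * (starRingEnd ℂ) (w * f b) = u * t := by
      rw [hu, ht, map_mul]; ring
    rw [e]
    simp only [Complex.normSq_mul]
    simp only [← normsq_eq]
  have E2 : ‖(a:ℂ) * z - w * (b:ℂ)‖^2
      = a^2 * ‖z‖^2 + ‖w‖^2 * b^2 - 2*(a*b*t.re) := by
    rw [normsq_eq, Complex.normSq_sub]
    have e : ((a:ℂ) * z) * (starRingEnd ℂ) (w * (b:ℂ)) = ((a*b : ℝ):ℂ) * t := by
      rw [ht, map_mul, Complex.conj_ofReal]; push_cast; ring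
    rw [e]
    have e2 : (((a*b : ℝ):ℂ) * t).re = a*b*t.re := by
      rw [Complex.re_ofReal_mul]
    rw [e2]
    simp only [Complex.normSq_mul, Complex.normSq_ofReal]
    simp only [← normsq_eq, ← sq]
  rw [E1, E2]
  have hAM : ‖t‖ ≤ (‖z‖^2 + ‖w‖^2)/2 := by
    rw [ht, norm_mul, RCLike.norm_conj]
    nlinarith [sq_nonneg (‖z‖ - ‖w‖)]
  have hL : ‖f a‖^2 + ‖f b‖^2 - K^2*(a^2+b^2) ≤ 0 := by linarith
  by_cases htz : t = 0
  · have hP : (u*t).re = 0 := by rw [htz]; simp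
    have hR : t.re = 0 := by rw [htz]; simp
    rw [hP, hR]
    nlinarith [mul_nonneg (sub_nonneg.mpr hfa2) (add_nonneg (sq_nonneg ‖z‖) (sq_nonneg ‖w‖)),
      mul_nonneg (sub_nonneg.mpr hfb2) (add_nonneg (sq_nonneg ‖z‖) (sq_nonneg ‖w‖))]
  · have hr : 0 < ‖t‖ := norm_pos_iff.mpr htz
    set r : ℝ := ‖t‖ with hrdef
    set c0 : ℂ := (starRingEnd ℂ) t / (r:ℂ) with hc0def
    have hc0 : ‖c0‖ = 1 := by
      rw [hc0def, norm_div, RCLike.norm_conj, Complex.norm_real,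
        Real.norm_eq_abs, abs_of_pos hr, hrdef]
      exact div_self ((norm_pos_iff.mpr htz).ne')
    have h3 := hc' c0 hc0
    have e3 : ((starRingEnd ℂ) c0 * u).re = (u*t).re / r := by
      rw [hc0def, map_div₀, Complex.conj_conj, Complex.conj_ofReal]
      rw [div_mul_eq_mul_div, Complex.div_ofReal_re, mul_comm]
    have e4 : c0.re = t.re / r := by
      rw [hc0def, Complex.div_ofReal_re, Complex.conj_re]
    rw [e3, e4] at h3
    have h4 : (‖f a‖^2 + ‖f b‖^2 - K^2*(a^2+b^2)) * r
        ≤ 2*(u*t).re - 2*K^2*a*b*t.re := by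
      have hrne : r ≠ 0 := ne_of_gt hr
      have e5 : 2*(u*t).re - 2*K^2*a*b*t.re
          = (2*((u*t).re/r) - 2*K^2*a*b*(t.re/r))*r := by
        field_simp
      rw [e5]
      apply mul_le_mul_of_nonneg_right _ hr.le
      linarith [h3]
    have h5 := mul_le_mul_of_nonpos_left hAM hL
    have h6 : (‖f a‖^2 + ‖f b‖^2 - K^2*(a^2+b^2)) * ((‖z‖^2 + ‖w‖^2)/2)
        ≤ 2*(u*t).re - 2*K^2*a*b*t.re := le_trans h5 h4
    set P : ℝ := (u*t).re with hP
    set R : ℝ := t.re with hR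
    ring_nf at h6 ⊢
    linarith [h6]


open Matrix

lemma sum_sq_eq_trace {d : ℕ} (M : Matrix (Fin d) (Fin d) ℂ) :
    ∑ i, ∑ j, ‖M i j‖^2 = (Matrix.trace (Mᴴ * M)).re := by
  rw [Matrix.trace]
  simp only [Matrix.diag_apply, Matrix.mul_apply, Matrix.conjTranspose_apply]
  rw [Complex.re_sum]
  simp_rw [Complex.re_sum]
  rw [Finset.sum_comm]
  apply Finset.sum_congr rfl; intro i _
  apply Finset.sum_congr rfl; intro j _
  rw [mul_comm, show star (M j i) = (starRingEnd ℂ) (M j i) from rfl, Complex.mul_conj]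
  exact Complex.sq_norm _

lemma sum_sq_mul_left {d : ℕ} (U M : Matrix (Fin d) (Fin d) ℂ) (hU : Uᴴ * U = 1) :
    ∑ i, ∑ j, ‖(U * M) i j‖^2 = ∑ i, ∑ j, ‖M i j‖^2 := by
  rw [sum_sq_eq_trace, sum_sq_eq_trace]
  have e : (U * M)ᴴ * (U * M) = Mᴴ * M := by
    rw [Matrix.conjTranspose_mul]
    calc Mᴴ * Uᴴ * (U * M) = Mᴴ * (Uᴴ * U) * M := by
          simp only [Matrix.mul_assoc]
      _ = Mᴴ * M := by rw [hU, Matrix.mul_one]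
  rw [e]

lemma sum_sq_mul_right {d : ℕ} (M V : Matrix (Fin d) (Fin d) ℂ) (hV : V * Vᴴ = 1) :
    ∑ i, ∑ j, ‖(M * V) i j‖^2 = ∑ i, ∑ j, ‖M i j‖^2 := by
  rw [sum_sq_eq_trace, sum_sq_eq_trace]
  congr 1
  rw [Matrix.conjTranspose_mul]
  rw [Matrix.mul_assoc Vᴴ Mᴴ (M * V), Matrix.trace_mul_comm]
  simp only [Matrix.mul_assoc]
  rw [hV, Matrix.mul_one]

lemma row_sum_one {d : ℕ} (Q : Matrix (Fin d) (Fin d) ℂ) (hQ : Q * Qᴴ = 1) (i : Fin d) :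
    ∑ j, ‖Q i j‖^2 = 1 := by
  have h := congrFun (congrFun hQ i) i
  rw [Matrix.mul_apply] at h
  have h2 : ((∑ j, ‖Q i j‖^2 : ℝ) : ℂ) = 1 := by
    push_cast
    rw [← Matrix.one_apply_eq i, ← h]
    apply Finset.sum_congr rfl; intro j _
    rw [Matrix.conjTranspose_apply,
      show star (Q i j) = (starRingEnd ℂ) (Q i j) from rfl, Complex.mul_conj]
    norm_cast
    exact normsq_eq _
  exact_mod_cast h2

lemma col_sum_one {d : ℕ} (Q : Matrix (Fin d) (Fin d) ℂ) (hQ : Qᴴ * Q = 1) (j : Fin d) :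
    ∑ i, ‖Q i j‖^2 = 1 := by
  have h := congrFun (congrFun hQ j) j
  rw [Matrix.mul_apply] at h
  have h2 : ((∑ i, ‖Q i j‖^2 : ℝ) : ℂ) = 1 := by
    push_cast
    rw [← Matrix.one_apply_eq j, ← h]
    apply Finset.sum_congr rfl; intro i _
    rw [Matrix.conjTranspose_apply, mul_comm,
      show star (Q i j) = (starRingEnd ℂ) (Q i j) from rfl, Complex.mul_conj]
    norm_cast
    exact normsq_eq _
  exact_mod_cast h2


open Matrix in
theorem stmt_15 (f : ℝ → ℂ) (K : ℝ) (h0 : f 0 = 0)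
    (hK : ∀ x y : ℝ, 0 ≤ x → 0 ≤ y → ∀ c : ℂ, ‖c‖ = 1 →
      ‖f x - c * f y‖ ≤ K * ‖(x : ℂ) - c * (y : ℂ)‖)
    (d : ℕ)
    (UA VA UB VB : Matrix (Fin d) (Fin d) ℂ)
    (hUA : UA ∈ Matrix.unitaryGroup (Fin d) ℂ)
    (hVA : VA ∈ Matrix.unitaryGroup (Fin d) ℂ)
    (hUB : UB ∈ Matrix.unitaryGroup (Fin d) ℂ)
    (hVB : VB ∈ Matrix.unitaryGroup (Fin d) ℂ)
    (σA σB : Fin d → ℝ) (hσA : ∀ i, 0 ≤ σA i) (hσB : ∀ i, 0 ≤ σB i)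
    (A B fsA fsB : Matrix (Fin d) (Fin d) ℂ)
    (hA : A = UA * Matrix.diagonal (fun i => (σA i : ℂ)) * VAᴴ)
    (hB : B = UB * Matrix.diagonal (fun i => (σB i : ℂ)) * VBᴴ)
    (hfsA : fsA = UA * Matrix.diagonal (fun i => f (σA i)) * VAᴴ)
    (hfsB : fsB = UB * Matrix.diagonal (fun i => f (σB i)) * VBᴴ) :
    frobNorm (fsA - fsB) ≤ K * frobNorm (A - B) := by
  have hKnn : 0 ≤ K := by
    have h := hK 1 0 zero_le_one le_rfl 1 (by simp)
    simp [h0] at h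
    calc (0:ℝ) ≤ ‖f 1‖ := norm_nonneg _
      _ ≤ K := by simpa using h
  have hUA1 : UA * UAᴴ = 1 := by
    rw [← Matrix.star_eq_conjTranspose]; exact Matrix.mem_unitaryGroup_iff.mp hUA
  have hUA2 : UAᴴ * UA = 1 := by
    rw [← Matrix.star_eq_conjTranspose]; exact Matrix.mem_unitaryGroup_iff'.mp hUA
  have hVA1 : VA * VAᴴ = 1 := by
    rw [← Matrix.star_eq_conjTranspose]; exact Matrix.mem_unitaryGroup_iff.mp hVA
  have hVA2 : VAᴴ * VA = 1 := by
    rw [← Matrix.star_eq_conjTranspose]; exact Matrix.mem_unitaryGroup_iff'.mp hVA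
  have hUB1 : UB * UBᴴ = 1 := by
    rw [← Matrix.star_eq_conjTranspose]; exact Matrix.mem_unitaryGroup_iff.mp hUB
  have hUB2 : UBᴴ * UB = 1 := by
    rw [← Matrix.star_eq_conjTranspose]; exact Matrix.mem_unitaryGroup_iff'.mp hUB
  have hVB1 : VB * VBᴴ = 1 := by
    rw [← Matrix.star_eq_conjTranspose]; exact Matrix.mem_unitaryGroup_iff.mp hVB
  have hVB2 : VBᴴ * VB = 1 := by
    rw [← Matrix.star_eq_conjTranspose]; exact Matrix.mem_unitaryGroup_iff'.mp hVB
  obtain ⟨Z, hZdef⟩ : ∃ Z, Z = VAᴴ * VB := ⟨_, rfl⟩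
  obtain ⟨W, hWdef⟩ : ∃ W, W = UAᴴ * UB := ⟨_, rfl⟩
  have hZ1 : Z * Zᴴ = 1 := by
    rw [hZdef, Matrix.conjTranspose_mul, Matrix.conjTranspose_conjTranspose]
    simp only [Matrix.mul_assoc]
    rw [← Matrix.mul_assoc VB VBᴴ VA, hVB1, Matrix.one_mul, hVA2]
  have hZ2 : Zᴴ * Z = 1 := by
    rw [hZdef, Matrix.conjTranspose_mul, Matrix.conjTranspose_conjTranspose]
    simp only [Matrix.mul_assoc]
    rw [← Matrix.mul_assoc VA VAᴴ VB, hVA1, Matrix.one_mul, hVB2]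
  have hW1 : W * Wᴴ = 1 := by
    rw [hWdef, Matrix.conjTranspose_mul, Matrix.conjTranspose_conjTranspose]
    simp only [Matrix.mul_assoc]
    rw [← Matrix.mul_assoc UB UBᴴ UA, hUB1, Matrix.one_mul, hUA2]
  have hW2 : Wᴴ * W = 1 := by
    rw [hWdef, Matrix.conjTranspose_mul, Matrix.conjTranspose_conjTranspose]
    simp only [Matrix.mul_assoc]
    rw [← Matrix.mul_assoc UA UAᴴ UB, hUA1, Matrix.one_mul, hUB2]
  -- reduction to diagonal form
  have eM : UAᴴ * (fsA - fsB) * VB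
      = Matrix.diagonal (fun i => f (σA i)) * Z
        - W * Matrix.diagonal (fun j => f (σB j)) := by
    rw [hfsA, hfsB, Matrix.mul_sub, Matrix.sub_mul]
    congr 1
    · rw [hZdef]
      simp only [← Matrix.mul_assoc]
      rw [hUA2, Matrix.one_mul]
    · rw [hWdef]
      simp only [← Matrix.mul_assoc]
      rw [Matrix.mul_assoc, hVB2, Matrix.mul_one]
  have eN : UAᴴ * (A - B) * VB
      = Matrix.diagonal (fun i => ((σA i : ℝ) : ℂ)) * Z
        - W * Matrix.diagonal (fun j => ((σB j : ℝ) : ℂ)) := by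
    rw [hA, hB, Matrix.mul_sub, Matrix.sub_mul]
    congr 1
    · rw [hZdef]
      simp only [← Matrix.mul_assoc]
      rw [hUA2, Matrix.one_mul]
    · rw [hWdef]
      simp only [← Matrix.mul_assoc]
      rw [Matrix.mul_assoc, hVB2, Matrix.mul_one]
  have hUAd : (UAᴴ)ᴴ * UAᴴ = 1 := by
    rw [Matrix.conjTranspose_conjTranspose]; exact hUA1
  have hS1 : ∑ i, ∑ j, ‖(fsA - fsB) i j‖^2
      = ∑ i, ∑ j, ‖f (σA i) * Z i j - W i j * f (σB j)‖^2 := by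
    rw [← sum_sq_mul_left UAᴴ (fsA - fsB) hUAd,
        ← sum_sq_mul_right (UAᴴ * (fsA - fsB)) VB hVB1, eM]
    apply Finset.sum_congr rfl; intro i _
    apply Finset.sum_congr rfl; intro j _
    rw [Matrix.sub_apply, Matrix.diagonal_mul, Matrix.mul_diagonal]
  have hS2 : ∑ i, ∑ j, ‖(A - B) i j‖^2
      = ∑ i, ∑ j, ‖((σA i : ℝ) : ℂ) * Z i j - W i j * ((σB j : ℝ) : ℂ)‖^2 := by
    rw [← sum_sq_mul_left UAᴴ (A - B) hUAd,
        ← sum_sq_mul_right (UAᴴ * (A - B)) VB hVB1, eN]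
    apply Finset.sum_congr rfl; intro i _
    apply Finset.sum_congr rfl; intro j _
    rw [Matrix.sub_apply, Matrix.diagonal_mul, Matrix.mul_diagonal]
  -- the entrywise bound plus vanishing correction
  have corr0 : ∑ i, ∑ j, (1/2) * ((‖f (σA i)‖^2 - ‖f (σB j)‖^2)
      - K^2 * ((σA i)^2 - (σB j)^2)) * (‖Z i j‖^2 - ‖W i j‖^2) = 0 := by
    have e : ∀ i j : Fin d, (1/2) * ((‖f (σA i)‖^2 - ‖f (σB j)‖^2)
        - K^2 * ((σA i)^2 - (σB j)^2)) * (‖Z i j‖^2 - ‖W i j‖^2)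
        = (1/2) * (‖f (σA i)‖^2 - K^2 * (σA i)^2) * (‖Z i j‖^2 - ‖W i j‖^2)
          - (1/2) * (‖f (σB j)‖^2 - K^2 * (σB j)^2) * (‖Z i j‖^2 - ‖W i j‖^2) := by
      intro i j; ring
    simp_rw [e, Finset.sum_sub_distrib]
    have t1 : ∑ i, ∑ j, (1/2) * (‖f (σA i)‖^2 - K^2 * (σA i)^2)
        * (‖Z i j‖^2 - ‖W i j‖^2) = 0 := by
      apply Finset.sum_eq_zero; intro i _
      rw [← Finset.mul_sum, Finset.sum_sub_distrib,
        row_sum_one Z hZ1 i, row_sum_one W hW1 i]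
      simp
    have t2 : ∑ i, ∑ j, (1/2) * (‖f (σB j)‖^2 - K^2 * (σB j)^2)
        * (‖Z i j‖^2 - ‖W i j‖^2) = 0 := by
      rw [Finset.sum_comm]
      apply Finset.sum_eq_zero; intro j _
      rw [← Finset.mul_sum, Finset.sum_sub_distrib,
        col_sum_one Z hZ2 j, col_sum_one W hW2 j]
      simp
    rw [t1, t2, sub_zero]
  have main : ∑ i, ∑ j, ‖f (σA i) * Z i j - W i j * f (σB j)‖^2
      ≤ K^2 * ∑ i, ∑ j, ‖((σA i : ℝ) : ℂ) * Z i j - W i j * ((σB j : ℝ) : ℂ)‖^2 := by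
    have step1 : ∑ i, ∑ j, ‖f (σA i) * Z i j - W i j * f (σB j)‖^2
        ≤ ∑ i, ∑ j, (K^2 * ‖((σA i : ℝ) : ℂ) * Z i j - W i j * ((σB j : ℝ) : ℂ)‖^2
          + (1/2) * ((‖f (σA i)‖^2 - ‖f (σB j)‖^2)
            - K^2 * ((σA i)^2 - (σB j)^2)) * (‖Z i j‖^2 - ‖W i j‖^2)) := by
      apply Finset.sum_le_sum; intro i _
      apply Finset.sum_le_sum; intro j _
      exact key_scalar f K h0 hK (σA i) (σB j) (hσA i) (hσB j) (Z i j) (W i j)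
    calc ∑ i, ∑ j, ‖f (σA i) * Z i j - W i j * f (σB j)‖^2
        ≤ _ := step1
      _ = ∑ i, ∑ j, K^2 * ‖((σA i : ℝ) : ℂ) * Z i j - W i j * ((σB j : ℝ) : ℂ)‖^2
          + ∑ i, ∑ j, (1/2) * ((‖f (σA i)‖^2 - ‖f (σB j)‖^2)
            - K^2 * ((σA i)^2 - (σB j)^2)) * (‖Z i j‖^2 - ‖W i j‖^2) := by
          simp_rw [Finset.sum_add_distrib]
      _ = K^2 * ∑ i, ∑ j, ‖((σA i : ℝ) : ℂ) * Z i j - W i j * ((σB j : ℝ) : ℂ)‖^2 := by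
          rw [corr0, add_zero]
          simp_rw [Finset.mul_sum]
  have final : ∑ i, ∑ j, ‖(fsA - fsB) i j‖^2 ≤ K^2 * ∑ i, ∑ j, ‖(A - B) i j‖^2 := by
    rw [hS1, hS2]; exact main
  show Real.sqrt _ ≤ K * Real.sqrt _
  calc Real.sqrt (∑ i, ∑ j, ‖(fsA - fsB) i j‖^2)
      ≤ Real.sqrt (K^2 * ∑ i, ∑ j, ‖(A - B) i j‖^2) := Real.sqrt_le_sqrt final
    _ = K * Real.sqrt (∑ i, ∑ j, ‖(A - B) i j‖^2) := by
        rw [Real.sqrt_mul (sq_nonneg K), Real.sqrt_sq hKnn]
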